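/- Let m ≥ 2, n_k ≥ 2 for all k, let C ∈ ℝ^{n_1×⋯×n_m} be an entrywise nonnegative cost tensor, η > 0, and r_k ∈ Δ^{n_k} for k = 1,…,m. Let K = exp(−C/η) and let K̃ ∈ ℝ^{n_1×⋯×n_m} be entrywise strictly positive with ||log(K) − log(K̃)||_∞ ≤ ε_log for some 0 < ε_log ≤ 1. Let P̃ be a positive diagonal scaling of K̃ with ||P̃||_1 = 1 satisfying Σ_{k=1}^m ||r_k(P̃) − r_k||_1 ≤ ε_stop for some ε_stop with 0 < ε_stop ≤ 1, and let P*_η be a minimizer of V_C^η over B(r_1,…,r_m). Then |V_C^η(P*_η) − V_C^η(P̃)| ≤ η · ( ε_log · (2 + log(2/ε_log)) + (ε_log/2) · log((Π_{k=1}^m n_k) − 1) + 2 ε_stop · log( (1/ε_stop) · ((Π_{k=1}^m n_k) − 1) ) ) + (ε_log + 2 ε_stop) · ||C||_∞. -/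

import Mathlib

open Finset

namespace MOT

/-- The index set of a tensor with mode sizes `n 0, …, n (m-1)`. -/
abbrev Idx {m : ℕ} (n : Fin m → ℕ) := ∀ k : Fin m, Fin (n k)

/-- A real tensor of order `m` with mode sizes `n k`. -/
abbrev Tensor {m : ℕ} (n : Fin m → ℕ) := Idx n → ℝ

/-- The `k`-th marginal of a tensor: `(r_k(X))_j = ∑_{I : i_k = j} X_I`. -/
noncomputable def marginal {m : ℕ} {n : Fin m → ℕ} (X : Tensor n) (k : Fin m)
    (j : Fin (n k)) : ℝ :=
  ∑ I : Idx n, if I k = j then X I else 0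

/-- The entrywise ℓ¹-norm of a tensor. -/
noncomputable def tnorm1 {m : ℕ} {n : Fin m → ℕ} (X : Tensor n) : ℝ :=
  ∑ I : Idx n, |X I|

/-- The uniform norm (maximum absolute entry) of a real-valued family. -/
noncomputable def supAbs {ι : Type*} (X : ι → ℝ) : ℝ := ⨆ i, |X i|

/-- The ℓ¹-norm of a vector. -/
noncomputable def vnorm1 {N : ℕ} (v : Fin N → ℝ) : ℝ := ∑ j, |v j|

/-- The Euclidean norm of a vector. -/
noncomputable def vnorm2 {N : ℕ} (v : Fin N → ℝ) : ℝ := Real.sqrt (∑ j, v j ^ 2)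

/-- The Euclidean inner product of two vectors. -/
noncomputable def vinner {N : ℕ} (v w : Fin N → ℝ) : ℝ := ∑ j, v j * w j

/-- `v ∈ Δ^N`: entrywise strictly positive with entries summing to 1. -/
def IsSimplex {N : ℕ} (v : Fin N → ℝ) : Prop := (∀ j, 0 < v j) ∧ ∑ j, v j = 1

/-- `P ∈ B(r_1,…,r_m)`: entrywise nonnegative with prescribed marginals. -/
def Feasible {m : ℕ} {n : Fin m → ℕ} (r : ∀ k : Fin m, Fin (n k) → ℝ)
    (P : Tensor n) : Prop :=
  (∀ I, 0 ≤ P I) ∧ ∀ k j, marginal P k j = r k j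

/-- The entropy `H(P) = -∑_I P_I log P_I` (with `0 · log 0 = 0`). -/
noncomputable def entropy {m : ℕ} {n : Fin m → ℕ} (P : Tensor n) : ℝ :=
  -∑ I : Idx n, P I * Real.log (P I)

/-- The inner product `⟨X, Y⟩ = ∑_I X_I Y_I` of two tensors. -/
noncomputable def tinner {m : ℕ} {n : Fin m → ℕ} (X Y : Tensor n) : ℝ :=
  ∑ I : Idx n, X I * Y I

/-- The entropic transport cost `V_C^η(P) = ⟨C, P⟩ − η H(P)`. -/
noncomputable def entCost {m : ℕ} {n : Fin m → ℕ} (C : Tensor n) (η : ℝ)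
    (P : Tensor n) : ℝ :=
  tinner C P - η * entropy P

/-- `P` is a positive diagonal scaling of `K`. -/
def IsScaling {m : ℕ} {n : Fin m → ℕ} (K P : Tensor n) : Prop :=
  ∃ β : ∀ k : Fin m, Fin (n k) → ℝ, ∀ I, P I = K I * ∏ k, Real.exp (β k (I k))

end MOT
namespace MOT


section Helpers

open Finset Real

local notation "φ" => Real.negMulLog

lemma phi_le_one_sub {x : ℝ} (hx : 0 ≤ x) : φ x ≤ 1 - x := by
  rcases eq_or_lt_of_le hx with h | h
  · simp [← h]
  · have := Real.log_le_sub_one_of_pos (x := x⁻¹) (by positivity)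
    have hφ : φ x = x * Real.log x⁻¹ := by
      rw [Real.negMulLog, Real.log_inv]; ring
    rw [hφ]
    calc x * Real.log x⁻¹ ≤ x * (x⁻¹ - 1) := by
          exact mul_le_mul_of_nonneg_left this hx
      _ = 1 - x := by field_simp
lemma phi_le_inv_e {x : ℝ} (hx : 0 ≤ x) : φ x ≤ (Real.exp 1)⁻¹ := by
  rcases eq_or_lt_of_le hx with h | h
  · simp [← h]; positivity
  · have h1 : Real.log (x⁻¹ * (Real.exp 1)⁻¹) ≤ x⁻¹ * (Real.exp 1)⁻¹ - 1 :=
      Real.log_le_sub_one_of_pos (by positivity)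
    have h2 : Real.log (x⁻¹ * (Real.exp 1)⁻¹) = Real.log x⁻¹ - 1 := by
      rw [Real.log_mul (by positivity) (by positivity), Real.log_inv (Real.exp 1), Real.log_exp]
      ring
    have h3 : Real.log x⁻¹ ≤ x⁻¹ * (Real.exp 1)⁻¹ := by linarith
    have hφ : φ x = x * Real.log x⁻¹ := by
      rw [Real.negMulLog, Real.log_inv]; ring
    rw [hφ]
    calc x * Real.log x⁻¹ ≤ x * (x⁻¹ * (Real.exp 1)⁻¹) := mul_le_mul_of_nonneg_left h3 hx
      _ = (Real.exp 1)⁻¹ := by field_simp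

lemma phi_subadd {a b : ℝ} (ha : 0 ≤ a) (hb : 0 ≤ b) : φ (a + b) ≤ φ a + φ b := by
  rcases eq_or_lt_of_le ha with h | h
  · simp [← h]
  rcases eq_or_lt_of_le hb with h' | h'
  · simp [← h']
  have h1 : a * Real.log a ≤ a * Real.log (a + b) :=
    mul_le_mul_of_nonneg_left (Real.log_le_log h (by linarith)) ha
  have h2 : b * Real.log b ≤ b * Real.log (a + b) :=
    mul_le_mul_of_nonneg_left (Real.log_le_log h' (by linarith)) hb
  simp only [Real.negMulLog]
  nlinarith

lemma phi_quad {u v d : ℝ} (hu : 0 ≤ u) (huv : u ≤ v) (hd : 0 ≤ d) :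
    φ u + φ (v + d) ≤ φ (u + d) + φ v := by
  rcases eq_or_lt_of_le hd with h | hdpos
  · simp [← h]
  have hlt : u < v + d := by linarith
  set t : ℝ := d / (v + d - u) with ht
  have hden : 0 < v + d - u := by linarith
  have ht0 : 0 ≤ t := by positivity
  have ht1 : t ≤ 1 := by rw [ht, div_le_one hden]; linarith
  have hc := Real.convexOn_mul_log
  have htd : t * (v + d - u) = d := by rw [ht]; exact div_mul_cancel₀ d (ne_of_gt hden)
  have e1 : (1 - t) • u + t • (v + d) = u + d := by
    simp only [smul_eq_mul]; linear_combination htd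
  have e2 : t • u + (1 - t) • (v + d) = v := by
    simp only [smul_eq_mul]; linear_combination (-1 : ℝ) * htd
  have m1 := hc.2 (Set.mem_Ici.2 hu) (Set.mem_Ici.2 (by linarith : (0:ℝ) ≤ v + d))
      (by linarith : (0:ℝ) ≤ 1 - t) ht0 (by ring)
  have m2 := hc.2 (Set.mem_Ici.2 hu) (Set.mem_Ici.2 (by linarith : (0:ℝ) ≤ v + d))
      ht0 (by linarith : (0:ℝ) ≤ 1 - t) (by ring)
  rw [e1] at m1
  rw [e2] at m2
  simp only [Real.negMulLog, smul_eq_mul] at *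
  nlinarith

lemma mono_xlog {z w c : ℝ} (hc0 : 0 < c) (hz : 0 < z) (hzw : z ≤ w)
    (hc : 1 ≤ Real.log (c / w)) :
    z * Real.log (c / z) ≤ w * Real.log (c / w) := by
  have hw : 0 < w := lt_of_lt_of_le hz hzw
  have hwz : 0 < w / z := by positivity
  have h1 : Real.log (c / z) = Real.log (c / w) + Real.log (w / z) := by
    rw [Real.log_div (ne_of_gt hc0) (ne_of_gt hz), Real.log_div (ne_of_gt hc0) (ne_of_gt hw),
      Real.log_div (ne_of_gt hw) (ne_of_gt hz)]
    ring
  have h2 : Real.log (w / z) ≤ w / z - 1 := Real.log_le_sub_one_of_pos hwz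
  have h3 : z * Real.log (w / z) ≤ w - z := by
    have := mul_le_mul_of_nonneg_left h2 (le_of_lt hz)
    have e : z * (w / z - 1) = w - z := by field_simp
    linarith [e ▸ this]
  rw [h1]
  have h4 : (w - z) * 1 ≤ (w - z) * Real.log (c / w) :=
    mul_le_mul_of_nonneg_left hc (by linarith)
  nlinarith


lemma phi_inv_e : φ (Real.exp 1)⁻¹ = (Real.exp 1)⁻¹ := by
  rw [Real.negMulLog, Real.log_inv, Real.log_exp]; ring

lemma phi_diff_le {x y : ℝ} (hx0 : 0 ≤ x) (hx1 : x ≤ 1) (hy0 : 0 ≤ y) (hy1 : y ≤ 1) :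
    |φ x - φ y| ≤ φ (min |x - y| (Real.exp 1)⁻¹) := by
  wlog hyx : y ≤ x generalizing x y
  · have h := this hy0 hy1 hx0 hx1 (le_of_not_ge hyx)
    rw [abs_sub_comm y x] at h
    rwa [abs_sub_comm]
  have hd0 : 0 ≤ x - y := by linarith
  have habs : |x - y| = x - y := abs_of_nonneg hd0
  rw [habs]
  set d := x - y with hdd
  rcases eq_or_lt_of_le hd0 with h | hdpos
  · have hd : d = 0 := h.symm
    have hxy : x = y := by rw [hdd] at hd; linarith
    rw [hxy, hd, min_eq_left (by positivity : (0:ℝ) ≤ (Real.exp 1)⁻¹)]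
    simp
  have h1 : φ x - φ y ≤ φ d := by
    have h := phi_subadd hy0 hd0
    have e : y + d = x := by rw [hdd]; ring
    rw [e] at h; linarith
  have hd1 : d ≤ 1 := by rw [hdd]; linarith
  have h2 : φ y - φ x ≤ φ (1 - d) := by
    have hq := phi_quad hy0 (by linarith : y ≤ 1 - d) hd0
    have e1 : (1 : ℝ) - d + d = 1 := by ring
    have e2 : y + d = x := by rw [hdd]; ring
    rw [e1, e2, Real.negMulLog_one] at hq
    linarith
  rcases le_or_gt d (Real.exp 1)⁻¹ with hc | hc
  · rw [min_eq_left hc]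
    have hphi_d : d ≤ φ d := by
      have hinv : Real.exp 1 ≤ d⁻¹ := by
        rw [← inv_inv (Real.exp 1)]
        exact inv_anti₀ hdpos hc
      have hlog : 1 ≤ Real.log d⁻¹ := by
        rw [Real.le_log_iff_exp_le (by positivity)]
        exact hinv
      have : d * 1 ≤ d * Real.log d⁻¹ := mul_le_mul_of_nonneg_left hlog (le_of_lt hdpos)
      have e : φ d = d * Real.log d⁻¹ := by rw [Real.negMulLog, Real.log_inv]; ring
      rw [e]; linarith
    have h1d : φ (1 - d) ≤ d := by
      have := phi_le_one_sub (x := 1 - d) (by linarith)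
      linarith
    rw [abs_sub_le_iff]
    exact ⟨h1, le_trans h2 (le_trans h1d hphi_d)⟩
  · rw [min_eq_right (le_of_lt hc), phi_inv_e, abs_sub_le_iff]
    exact ⟨le_trans h1 (phi_le_inv_e hd0), le_trans h2 (phi_le_inv_e (by linarith))⟩

lemma sum_phi_le {ι : Type*} [Fintype ι] [Nonempty ι] (x : ι → ℝ) (hx : ∀ i, 0 ≤ x i) :
    ∑ i, φ (x i) ≤ (Fintype.card ι : ℝ) * φ ((∑ i, x i) / (Fintype.card ι : ℝ)) := by
  set N : ℝ := (Fintype.card ι : ℝ) with hN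
  have hN0 : 0 < N := by
    rw [hN]; exact_mod_cast Fintype.card_pos
  set a : ℝ := (∑ i, x i) / N with ha
  have hsx : 0 ≤ ∑ i, x i := Finset.sum_nonneg fun i _ => hx i
  have ha0 : 0 ≤ a := by positivity
  rcases eq_or_lt_of_le ha0 with h | hapos
  · have hsum0 : ∑ i, x i = 0 := by
      have : a * N = ∑ i, x i := by rw [ha]; field_simp
      rw [← this, ← h]; ring
    have hx0 : ∀ i ∈ Finset.univ, x i = 0 :=
      (Finset.sum_eq_zero_iff_of_nonneg (fun i _ => hx i)).1 hsum0
    have : ∑ i, φ (x i) = 0 := Finset.sum_eq_zero fun i hi => by rw [hx0 i hi]; simp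
    rw [this, ← h]; simp
  · have tangent : ∀ i, φ (x i) ≤ -(x i) * Real.log a - x i + a := by
      intro i
      rcases eq_or_lt_of_le (hx i) with h0 | h0
      · rw [← h0]; simp; positivity
      · have hlog : Real.log (a / x i) ≤ a / x i - 1 := Real.log_le_sub_one_of_pos (by positivity)
        have hm : x i * Real.log (a / x i) ≤ a - x i := by
          have := mul_le_mul_of_nonneg_left hlog (le_of_lt h0)
          have e : x i * (a / x i - 1) = a - x i := by field_simp
          linarith [e ▸ this]
        have e2 : x i * Real.log (a / x i) = x i * Real.log a - x i * Real.log (x i) := by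
          rw [Real.log_div (ne_of_gt hapos) (ne_of_gt h0)]; ring
        rw [Real.negMulLog]
        nlinarith [e2 ▸ hm]
    calc ∑ i, φ (x i) ≤ ∑ i, (-(x i) * Real.log a - x i + a) :=
          Finset.sum_le_sum fun i _ => tangent i
      _ = -(∑ i, x i) * Real.log a - (∑ i, x i) + N * a := by
          rw [Finset.sum_add_distrib, Finset.sum_sub_distrib, Finset.sum_const,
            Finset.card_univ, neg_mul, ← Finset.sum_mul]
          simp only [neg_mul, Finset.sum_neg_distrib, nsmul_eq_mul, hN]
          try ring
      _ = N * φ a := by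
          have e : ∑ i, x i = N * a := by rw [ha]; field_simp
          rw [e, Real.negMulLog]; ring

lemma entropy_diff_le {ι : Type*} [Fintype ι] (hN : 4 ≤ Fintype.card ι)
    (p q : ι → ℝ) (hp0 : ∀ i, 0 ≤ p i) (hp1 : ∑ i, p i = 1)
    (hq0 : ∀ i, 0 ≤ q i) (hq1 : ∑ i, q i = 1)
    {u : ℝ} (hu0 : 0 < u) (hu2 : u ≤ 2) (hd : ∑ i, |p i - q i| ≤ u) :
    |∑ i, φ (p i) - ∑ i, φ (q i)| ≤
      u * Real.log (2 * ((Fintype.card ι : ℝ) - 1) / u) := by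
  have hNe : Nonempty ι := Fintype.card_pos_iff.mp (by omega)
  set N : ℝ := (Fintype.card ι : ℝ) with hNdef
  have hN4 : (4 : ℝ) ≤ N := by rw [hNdef]; exact_mod_cast hN
  set c : ℝ := 2 * (N - 1) with hcdef
  have hc6 : (6 : ℝ) ≤ c := by rw [hcdef]; linarith
  have hc0 : 0 < c := by linarith
  have hcu3 : (3 : ℝ) ≤ c / u := by
    rw [le_div_iff₀ hu0]; linarith
  have hlogcu : 1 ≤ Real.log (c / u) := by
    rw [Real.le_log_iff_exp_le (by linarith)]
    have := Real.exp_one_lt_d9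
    linarith
  have hp1' : ∀ i, p i ≤ 1 := fun i => by
    calc p i ≤ ∑ j, p j := Finset.single_le_sum (fun j _ => hp0 j) (Finset.mem_univ i)
      _ = 1 := hp1
  have hq1' : ∀ i, q i ≤ 1 := fun i => by
    calc q i ≤ ∑ j, q j := Finset.single_le_sum (fun j _ => hq0 j) (Finset.mem_univ i)
      _ = 1 := hq1
  set mm : ι → ℝ := fun i => min |p i - q i| (Real.exp 1)⁻¹ with hmm
  have hm0 : ∀ i, 0 ≤ mm i := fun i => le_min (abs_nonneg _) (by positivity)
  set s : ℝ := ∑ i, mm i with hs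
  have hs0 : 0 ≤ s := Finset.sum_nonneg fun i _ => hm0 i
  have hsu : s ≤ u :=
    le_trans (Finset.sum_le_sum fun i _ => min_le_left _ _) hd
  have step1 : |∑ i, φ (p i) - ∑ i, φ (q i)| ≤ ∑ i, |φ (p i) - φ (q i)| := by
    rw [← Finset.sum_sub_distrib]
    exact Finset.abs_sum_le_sum_abs _ _
  have step2 : ∑ i, |φ (p i) - φ (q i)| ≤ ∑ i, φ (mm i) :=
    Finset.sum_le_sum fun i _ => phi_diff_le (hp0 i) (hp1' i) (hq0 i) (hq1' i)
  have step3 : ∑ i, φ (mm i) ≤ N * φ (s / N) := sum_phi_le mm hm0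
  have hRHS0 : 0 ≤ u * Real.log (c / u) := by nlinarith
  rcases eq_or_lt_of_le hs0 with h | hspos
  · have : N * φ (s / N) = 0 := by rw [← h]; simp
    calc |∑ i, φ (p i) - ∑ i, φ (q i)| ≤ N * φ (s / N) :=
          le_trans step1 (le_trans step2 step3)
      _ = 0 := this
      _ ≤ u * Real.log (c / u) := hRHS0
  · have hN0 : (0:ℝ) < N := by linarith
    have e1 : N * φ (s / N) = s * Real.log (N / s) := by
      rw [Real.negMulLog, Real.log_div (ne_of_gt hspos) (ne_of_gt hN0)]
      have : Real.log (N / s) = Real.log N - Real.log s :=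
        Real.log_div (ne_of_gt hN0) (ne_of_gt hspos)
      rw [this]
      field_simp
      ring
    have e2 : s * Real.log (N / s) ≤ s * Real.log (c / s) := by
      apply mul_le_mul_of_nonneg_left _ hs0
      apply Real.log_le_log (by positivity)
      have hNc : N ≤ c := by rw [hcdef]; linarith
      exact div_le_div_of_nonneg_right hNc hs0
    have e3 : s * Real.log (c / s) ≤ u * Real.log (c / u) :=
      mono_xlog hc0 hspos hsu hlogcu
    calc |∑ i, φ (p i) - ∑ i, φ (q i)| ≤ N * φ (s / N) :=
          le_trans step1 (le_trans step2 step3)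
      _ = s * Real.log (N / s) := e1
      _ ≤ u * Real.log (c / u) := le_trans e2 e3


variable {m : ℕ} {n : Fin m → ℕ}

lemma sum_marginal (X : Tensor n) (k : Fin m) : ∑ j, marginal X k j = ∑ I, X I := by
  unfold marginal
  rw [Finset.sum_comm]
  apply Finset.sum_congr rfl
  intro I _
  simp

lemma marginal_nonneg {X : Tensor n} (hX : ∀ I, 0 ≤ X I) (k : Fin m) (j : Fin (n k)) :
    0 ≤ marginal X k j :=
  Finset.sum_nonneg fun I _ => by split_ifs <;> simp [hX I]

lemma marginal_mono {X Y : Tensor n} (h : ∀ I, X I ≤ Y I) (k : Fin m) (j : Fin (n k)) :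
    marginal X k j ≤ marginal Y k j :=
  Finset.sum_le_sum fun I _ => by split_ifs <;> simp [h I]

lemma marginal_add (X Y : Tensor n) (k : Fin m) (j : Fin (n k)) :
    marginal (fun I => X I + Y I) k j = marginal X k j + marginal Y k j := by
  unfold marginal
  rw [← Finset.sum_add_distrib]
  apply Finset.sum_congr rfl
  intro I _
  split_ifs <;> simp

lemma marginal_mul_comp (X : Tensor n) (k : Fin m) (f : Fin (n k) → ℝ) (j : Fin (n k)) :
    marginal (fun I => X I * f (I k)) k j = marginal X k j * f j := by
  unfold marginal
  rw [Finset.sum_mul]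
  apply Finset.sum_congr rfl
  intro I _
  split_ifs with h
  · simp only []
    rw [h]
  · simp

lemma marginal_rank_one (e : ∀ k : Fin m, Fin (n k) → ℝ) (k : Fin m) (j : Fin (n k)) :
    marginal (fun I => ∏ l, e l (I l)) k j
      = e k j * ∏ l : {l : Fin m // l ≠ k}, (∑ j', e (l : Fin m) j') := by
  unfold marginal
  rw [Fintype.sum_equiv (Equiv.piSplitAt k (fun l => Fin (n l)))
    (fun I => if I k = j then ∏ l, e l (I l) else 0)
    (fun y => if y.1 = j then e k y.1 * ∏ l : {l : Fin m // l ≠ k}, e (l : Fin m) (y.2 l) else 0)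
    (fun I => by
      simp only [Equiv.piSplitAt_apply]
      congr 1
      rw [← Finset.mul_prod_erase Finset.univ _ (Finset.mem_univ k)]
      congr 1
      rw [← Finset.prod_subtype (Finset.univ.erase k)
        (fun l => by simp [Finset.mem_erase]) (fun l => e l (I l))])]
  rw [Fintype.sum_prod_type]
  rw [Finset.sum_eq_single j]
  · simp only [if_true, ← Finset.mul_sum]
    congr 1
    rw [Finset.prod_univ_sum (fun _ => Finset.univ)
      (fun (l : {l : Fin m // l ≠ k}) (j' : Fin (n (l : Fin m))) => e (l : Fin m) j')]
    rw [Fintype.piFinset_univ]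
  · intro b _ hb
    simp [hb]
  · intro h; exact absurd (Finset.mem_univ j) h

lemma abs_le_supAbs {ι : Type*} [Fintype ι] (X : ι → ℝ) (i : ι) : |X i| ≤ supAbs X :=
  le_ciSup (Set.Finite.bddAbove (Set.finite_range (fun i => |X i|))) i

lemma supAbs_nonneg {ι : Type*} [Fintype ι] [Nonempty ι] (X : ι → ℝ) : 0 ≤ supAbs X :=
  le_trans (abs_nonneg _) (abs_le_supAbs X (Classical.arbitrary ι))

lemma marginal_smul (X : Tensor n) (c : ℝ) (k : Fin m) (j : Fin (n k)) :
    marginal (fun I => X I * c) k j = marginal X k j * c := by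
  unfold marginal
  rw [Finset.sum_mul]
  apply Finset.sum_congr rfl
  intro I _
  split_ifs <;> simp

/-- one scaling step of the rounding algorithm -/
noncomputable def scaleStep (q : ∀ k : Fin m, Fin (n k) → ℝ) (P : Tensor n) (k : Fin m) :
    Tensor n :=
  fun I => P I * min 1 (q k (I k) / marginal P k (I k))

lemma scaleStep_nonneg {q : ∀ k : Fin m, Fin (n k) → ℝ} (hq : ∀ k j, 0 ≤ q k j)
    {P : Tensor n} (hP : ∀ I, 0 ≤ P I) (k : Fin m) (I : Idx n) :
    0 ≤ scaleStep q P k I := by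
  exact mul_nonneg (hP I)
    (le_min zero_le_one (div_nonneg (hq k (I k)) (marginal_nonneg hP k (I k))))

lemma scaleStep_le {q : ∀ k : Fin m, Fin (n k) → ℝ} (hq : ∀ k j, 0 ≤ q k j)
    {P : Tensor n} (hP : ∀ I, 0 ≤ P I) (k : Fin m) (I : Idx n) :
    scaleStep q P k I ≤ P I := by
  calc scaleStep q P k I ≤ P I * 1 :=
        mul_le_mul_of_nonneg_left (min_le_left _ _) (hP I)
    _ = P I := mul_one _

lemma scaleStep_marginal {q : ∀ k : Fin m, Fin (n k) → ℝ} (hq : ∀ k j, 0 ≤ q k j)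
    {P : Tensor n} (hP : ∀ I, 0 ≤ P I) (k : Fin m) (j : Fin (n k)) :
    marginal (scaleStep q P k) k j = min (marginal P k j) (q k j) := by
  have := marginal_mul_comp P k (fun j' => min 1 (q k j' / marginal P k j')) j
  rw [show scaleStep q P k = fun I => P I * min 1 (q k (I k) / marginal P k (I k)) from rfl]
  rw [this]
  rcases eq_or_lt_of_le (marginal_nonneg hP k j) with h | h
  · rw [← h, zero_mul]
    exact (min_eq_left (hq k j)).symm
  · rcases le_or_gt (q k j / marginal P k j) 1 with hle | hlt
    · rw [min_eq_right hle, min_eq_right (by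
        rw [div_le_one h] at hle; exact hle)]
      field_simp
    · rw [min_eq_left (le_of_lt hlt), min_eq_left (by
        rw [lt_div_iff₀ h] at hlt; nlinarith), mul_one]

lemma foldl_scale_prop (q : ∀ k : Fin m, Fin (n k) → ℝ) (hq : ∀ k j, 0 ≤ q k j) :
    ∀ (L : List (Fin m)) (P : Tensor n), (∀ I, 0 ≤ P I) →
      (∀ I, 0 ≤ L.foldl (scaleStep q) P I) ∧
      (∀ I, L.foldl (scaleStep q) P I ≤ P I) ∧
      (∀ k ∈ L, ∀ j, marginal (L.foldl (scaleStep q) P) k j ≤ q k j) ∧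
      ((∑ I, P I) - ∑ I, L.foldl (scaleStep q) P I
         ≤ (L.map (fun k => ∑ j, max (marginal P k j - q k j) 0)).sum) := by
  intro L
  induction L with
  | nil =>
      intro P hP
      refine ⟨hP, fun I => le_refl _, by simp, by simp⟩
  | cons k L ih =>
      intro P hP
      simp only [List.foldl_cons]
      set P' := scaleStep q P k with hP'def
      have hP'0 : ∀ I, 0 ≤ P' I := fun I => scaleStep_nonneg hq hP k I
      have hP'le : ∀ I, P' I ≤ P I := fun I => scaleStep_le hq hP k I
      obtain ⟨ih0, ihle, ihm, ihmass⟩ := ih P' hP'0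
      refine ⟨ih0, fun I => le_trans (ihle I) (hP'le I), ?_, ?_⟩
      · intro k' hk' j
        rcases List.mem_cons.mp hk' with h | h
        · subst h
          calc marginal (L.foldl (scaleStep q) P') k' j ≤ marginal P' k' j :=
                marginal_mono ihle k' j
            _ = min (marginal P k' j) (q k' j) := scaleStep_marginal hq hP k' j
            _ ≤ q k' j := min_le_right _ _
        · exact ihm k' h j
      · have hstep : (∑ I, P I) - ∑ I, P' I = ∑ j, max (marginal P k j - q k j) 0 := by
          rw [← sum_marginal P k, ← sum_marginal P' k, ← Finset.sum_sub_distrib]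
          apply Finset.sum_congr rfl
          intro j _
          rw [scaleStep_marginal hq hP k j]
          rcases le_total (marginal P k j) (q k j) with h | h
          · rw [min_eq_left h, max_eq_right (by linarith)]; ring
          · rw [min_eq_right h, max_eq_left (by linarith)]
        have htail : (∑ I, P' I) - ∑ I, L.foldl (scaleStep q) P' I
            ≤ (L.map (fun k' => ∑ j, max (marginal P k' j - q k' j) 0)).sum := by
          apply le_trans ihmass
          apply List.sum_le_sum
          intro k' _
          apply Finset.sum_le_sum
          intro j _
          exact max_le_max (sub_le_sub_right (marginal_mono hP'le k' j) _) (le_refl 0)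
        simp only [List.map_cons, List.sum_cons]
        linarith

lemma exists_rounding (hm : 0 < m) (P : Tensor n) (hP0 : ∀ I, 0 ≤ P I) (hP1 : ∑ I, P I = 1)
    (q : ∀ k : Fin m, Fin (n k) → ℝ) (hq0 : ∀ k j, 0 ≤ q k j) (hq1 : ∀ k, ∑ j, q k j = 1) :
    ∃ Q : Tensor n, (∀ I, 0 ≤ Q I) ∧ (∀ k j, marginal Q k j = q k j) ∧
      ∑ I, |Q I - P I| ≤ 2 * ∑ k, ∑ j, max (marginal P k j - q k j) 0 := by
  obtain ⟨h0, hle, hmarg, hmass⟩ :=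
    foldl_scale_prop q hq0 (List.finRange m) P hP0
  set P1 : Tensor n := (List.finRange m).foldl (scaleStep q) P with hP1def
  have hmarg' : ∀ k j, marginal P1 k j ≤ q k j := fun k j =>
    hmarg k (List.mem_finRange k) j
  have hmass' : (∑ I, P I) - ∑ I, P1 I ≤ ∑ k, ∑ j, max (marginal P k j - q k j) 0 := by
    apply le_trans hmass
    rw [← Fin.sum_univ_def (fun k => ∑ j, max (marginal P k j - q k j) 0)]
  set e : ∀ k : Fin m, Fin (n k) → ℝ := fun k j => q k j - marginal P1 k j with he
  have he0 : ∀ k j, 0 ≤ e k j := fun k j => by simp [he]; linarith [hmarg' k j]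
  set err : ℝ := 1 - ∑ I, P1 I with herr
  have herrk : ∀ k, ∑ j, e k j = err := by
    intro k
    rw [he, Finset.sum_sub_distrib, sum_marginal, hq1 k, herr]
  have hmaxnn : (0:ℝ) ≤ ∑ k, ∑ j, max (marginal P k j - q k j) 0 :=
    Finset.sum_nonneg fun k _ => Finset.sum_nonneg fun j _ => le_max_right _ _
  have k0 : Fin m := ⟨0, hm⟩
  have herr0 : 0 ≤ err := by
    rw [← herrk k0]
    exact Finset.sum_nonneg fun j _ => he0 k0 j
  have herrle : err ≤ ∑ k, ∑ j, max (marginal P k j - q k j) 0 := by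
    rw [herr]; rw [← hP1]; exact hmass'
  rcases eq_or_lt_of_le herr0 with heq | hpos
  · -- err = 0 : P1 already has the marginals
    refine ⟨P1, h0, ?_, ?_⟩
    · intro k j
      have hz : ∑ j', e k j' = 0 := by rw [herrk k, ← heq]
      have := (Finset.sum_eq_zero_iff_of_nonneg (fun j' _ => he0 k j')).1 hz j
        (Finset.mem_univ j)
      simp [he] at this
      linarith [this]
    · have : ∀ I, |P1 I - P I| = P I - P1 I := fun I => by
        rw [abs_of_nonpos (by linarith [hle I])]; ring
      calc ∑ I, |P1 I - P I| = (∑ I, P I) - ∑ I, P1 I := by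
            rw [← Finset.sum_sub_distrib]
            exact Finset.sum_congr rfl fun I _ => this I
        _ = err := by rw [herr, hP1]
        _ ≤ 2 * ∑ k, ∑ j, max (marginal P k j - q k j) 0 := by
            rw [← heq] at *; linarith
  · -- err > 0 : add rank-one correction
    set c : ℝ := (err ^ (m - 1))⁻¹ with hc
    have hc0 : 0 ≤ c := by positivity
    set Q : Tensor n := fun I => P1 I + (∏ k, e k (I k)) * c with hQ
    have hcorr0 : ∀ I : Idx n, 0 ≤ (∏ l, e l (I l)) * c := fun I =>
      mul_nonneg (Finset.prod_nonneg fun k _ => he0 k (I k)) hc0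
    refine ⟨Q, fun I => add_nonneg (h0 I) (hcorr0 I), ?_, ?_⟩
    · intro k j
      have hcardk : Fintype.card {l : Fin m // l ≠ k} = m - 1 := by
        rw [Fintype.card_subtype_compl (p := fun l => l = k)]
        simp [Fintype.card_subtype_eq]
      have hm1 : marginal Q k j = marginal P1 k j
          + marginal (fun I => (∏ l, e l (I l)) * c) k j :=
        marginal_add P1 (fun I => (∏ l, e l (I l)) * c) k j
      have hm2 : marginal (fun I => (∏ l, e l (I l)) * c) k j
          = marginal (fun I => (∏ l, e l (I l))) k j * c :=
        marginal_smul (fun I => (∏ l, e l (I l))) c k j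
      rw [hm1, hm2, marginal_rank_one]
      have hprod : ∏ l : {l : Fin m // l ≠ k}, (∑ j', e (l : Fin m) j') = err ^ (m - 1) := by
        have h1 : ∏ l : {l : Fin m // l ≠ k}, (∑ j', e (l : Fin m) j')
            = ∏ _l : {l : Fin m // l ≠ k}, err :=
          Finset.prod_congr rfl (fun l _ => herrk _)
        rw [h1, Finset.prod_const, Finset.card_univ, hcardk]
      rw [hprod, hc]
      have herrpow : (err : ℝ) ^ (m - 1) ≠ 0 := by positivity
      have : e k j * err ^ (m - 1) * (err ^ (m - 1))⁻¹ = e k j := by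
        field_simp
      rw [this, he]
      ring
    · have habs : ∀ I : Idx n, |Q I - P I| ≤ (P I - P1 I) + (∏ l, e l (I l)) * c := by
        intro I
        have e1 : Q I - P I = (P1 I - P I) + (∏ l, e l (I l)) * c := by rw [hQ]; ring
        rw [e1]
        calc |(P1 I - P I) + (∏ l, e l (I l)) * c|
            ≤ |P1 I - P I| + |(∏ l, e l (I l)) * c| := abs_add_le _ _
          _ = (P I - P1 I) + (∏ l, e l (I l)) * c := by
              rw [abs_of_nonpos (by linarith [hle I]), abs_of_nonneg (hcorr0 I)]
              ring
      have hsumcorr : ∑ I : Idx n, (∏ l, e l (I l)) * c = err := by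
        rw [← Finset.sum_mul]
        have hs : ∑ I : Idx n, ∏ l, e l (I l) = err ^ m := by
          rw [← Fintype.piFinset_univ, ← Finset.prod_univ_sum]
          have h1 : ∏ l, (∑ j' : Fin (n l), e l j') = ∏ _l : Fin m, err :=
            Finset.prod_congr rfl (fun l _ => herrk l)
          rw [h1, Finset.prod_const, Finset.card_univ, Fintype.card_fin]
        rw [hs, hc, show m = (m - 1) + 1 by omega, pow_succ]
        have herrpow : (err : ℝ) ^ (m - 1) ≠ 0 := by positivity
        field_simp
        simp only [Nat.add_sub_cancel]
      calc ∑ I, |Q I - P I|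
          ≤ ∑ I, ((P I - P1 I) + (∏ l, e l (I l)) * c) :=
            Finset.sum_le_sum fun I _ => habs I
        _ = ((∑ I, P I) - ∑ I, P1 I) + err := by
            rw [Finset.sum_add_distrib, Finset.sum_sub_distrib, hsumcorr]
        _ = err + err := by rw [hP1, ← herr]
        _ ≤ 2 * ∑ k, ∑ j, max (marginal P k j - q k j) 0 := by linarith

lemma abs_sum_mul_le {ι : Type*} [Fintype ι] (X Y : ι → ℝ) (c : ℝ)
    (hc : ∀ i, |Y i| ≤ c) : |∑ i, X i * Y i| ≤ c * ∑ i, |X i| := by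
  calc |∑ i, X i * Y i| ≤ ∑ i, |X i * Y i| := Finset.abs_sum_le_sum_abs _ _
    _ ≤ ∑ i, |X i| * c := by
        apply Finset.sum_le_sum
        intro i _
        rw [abs_mul]
        exact mul_le_mul_of_nonneg_left (hc i) (abs_nonneg _)
    _ = c * ∑ i, |X i| := by rw [← Finset.sum_mul]; ring

lemma sum_mul_sum_beta (X : Tensor n) (β : ∀ k : Fin m, Fin (n k) → ℝ) :
    ∑ I, X I * (∑ k, β k (I k)) = ∑ k, ∑ j, β k j * marginal X k j := by
  calc ∑ I, X I * (∑ k, β k (I k)) = ∑ I, ∑ k, X I * β k (I k) := by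
        apply Finset.sum_congr rfl; intro I _; rw [Finset.mul_sum]
    _ = ∑ k, ∑ I : Idx n, X I * β k (I k) := Finset.sum_comm
    _ = ∑ k, ∑ j, β k j * marginal X k j := by
        apply Finset.sum_congr rfl
        intro k _
        unfold marginal
        symm
        calc ∑ j, β k j * ∑ I : Idx n, (if I k = j then X I else 0)
            = ∑ j, ∑ I : Idx n, (if I k = j then β k j * X I else 0) := by
              apply Finset.sum_congr rfl; intro j _
              rw [Finset.mul_sum]
              apply Finset.sum_congr rfl; intro I _
              rw [mul_ite, mul_zero]
          _ = ∑ I : Idx n, ∑ j, (if I k = j then β k j * X I else 0) := Finset.sum_comm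
          _ = ∑ I : Idx n, X I * β k (I k) := by
              apply Finset.sum_congr rfl; intro I _
              rw [Finset.sum_ite_eq]
              simp [mul_comm]

/-- Gibbs variational principle for diagonal scalings. -/
lemma scaling_optimal {Kt : Tensor n} (hKt : ∀ I, 0 < Kt I)
    {Pt : Tensor n} (β : ∀ k : Fin m, Fin (n k) → ℝ)
    (hβ : ∀ I, Pt I = Kt I * ∏ k, Real.exp (β k (I k)))
    {Q : Tensor n} (hQ0 : ∀ I, 0 ≤ Q I) (hsum : ∑ I, Q I = ∑ I, Pt I)
    (hmarg : ∀ k j, marginal Q k j = marginal Pt k j) :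
    ∑ I, Pt I * (Real.log (Pt I) - Real.log (Kt I))
      ≤ ∑ I, Q I * (Real.log (Q I) - Real.log (Kt I)) := by
  have hPt0 : ∀ I, 0 < Pt I := fun I => by
    rw [hβ I]
    exact mul_pos (hKt I) (Finset.prod_pos fun k _ => Real.exp_pos _)
  have hlogPt : ∀ I, Real.log (Pt I) = Real.log (Kt I) + ∑ k, β k (I k) := by
    intro I
    rw [hβ I, Real.log_mul (ne_of_gt (hKt I))
      (ne_of_gt (Finset.prod_pos fun k _ => Real.exp_pos _)),
      Real.log_prod (fun k _ => ne_of_gt (Real.exp_pos _))]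
    simp [Real.log_exp]
  have e1 : ∑ I, Pt I * (Real.log (Pt I) - Real.log (Kt I))
      = ∑ k, ∑ j, β k j * marginal Pt k j := by
    rw [← sum_mul_sum_beta]
    apply Finset.sum_congr rfl
    intro I _
    rw [hlogPt I]
    ring
  have e2 : ∑ I, Q I * (Real.log (Q I) - Real.log (Kt I))
      = (∑ I, Q I * (Real.log (Q I) - Real.log (Pt I)))
        + ∑ k, ∑ j, β k j * marginal Q k j := by
    rw [← sum_mul_sum_beta, ← Finset.sum_add_distrib]
    apply Finset.sum_congr rfl
    intro I _
    rw [hlogPt I]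
    ring
  have e3 : ∑ k, ∑ j, β k j * marginal Q k j = ∑ k, ∑ j, β k j * marginal Pt k j := by
    apply Finset.sum_congr rfl; intro k _
    apply Finset.sum_congr rfl; intro j _
    rw [hmarg k j]
  have gibbs : 0 ≤ ∑ I, Q I * (Real.log (Q I) - Real.log (Pt I)) := by
    have key : ∀ I, Q I * (Real.log (Pt I) - Real.log (Q I)) ≤ Pt I - Q I := by
      intro I
      rcases eq_or_lt_of_le (hQ0 I) with h | h
      · rw [← h]; simp; linarith [hPt0 I]
      · have hlog : Real.log (Pt I / Q I) ≤ Pt I / Q I - 1 :=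
          Real.log_le_sub_one_of_pos (div_pos (hPt0 I) h)
        rw [Real.log_div (ne_of_gt (hPt0 I)) (ne_of_gt h)] at hlog
        have := mul_le_mul_of_nonneg_left hlog (le_of_lt h)
        have e : Q I * (Pt I / Q I - 1) = Pt I - Q I := by field_simp
        nlinarith
    have : ∑ I, Q I * (Real.log (Pt I) - Real.log (Q I)) ≤ ∑ I, (Pt I - Q I) :=
      Finset.sum_le_sum fun I _ => key I
    rw [Finset.sum_sub_distrib] at this
    have hz : ∑ I, Q I * (Real.log (Pt I) - Real.log (Q I)) ≤ 0 := by
      rw [hsum] at this; linarith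
    have flip : ∑ I, Q I * (Real.log (Q I) - Real.log (Pt I))
        = -∑ I, Q I * (Real.log (Pt I) - Real.log (Q I)) := by
      rw [← Finset.sum_neg_distrib]
      apply Finset.sum_congr rfl; intro I _; ring
    rw [flip]; linarith
  rw [e1, e2, e3]
  linarith


lemma sum_max_eq_half {N : ℕ} (v : Fin N → ℝ) (h : ∑ j, v j = 0) :
    ∑ j, max (v j) 0 = (∑ j, |v j|) / 2 := by
  have e : ∀ j, max (v j) 0 = (v j + |v j|) / 2 := by
    intro j
    rcases le_total (v j) 0 with h' | h'
    · rw [max_eq_right h', abs_of_nonpos h']; ring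
    · rw [max_eq_left h', abs_of_nonneg h']; ring
  calc ∑ j, max (v j) 0 = ∑ j, (v j + |v j|) / 2 :=
        Finset.sum_congr rfl fun j _ => e j
    _ = ((∑ j, v j) + ∑ j, |v j|) / 2 := by
        rw [← Finset.sum_div, Finset.sum_add_distrib]
    _ = (∑ j, |v j|) / 2 := by rw [h]; ring

end Helpers


set_option maxHeartbeats 2000000 in
/-- Theorem `thm:LowRankError`: impact of approximating the Gibbs kernel
`K = exp(−C/η)` by `K̃` with `‖log K − log K̃‖_∞ ≤ ε_log` on the entropic transport cost of
the transport plan `P̃` returned by the approximate Sinkhorn iteration. -/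
theorem approx_gibbs_kernel_entropic_cost_bound
    {m : ℕ} (hm : 2 ≤ m) {n : Fin m → ℕ} (hn : ∀ k, 2 ≤ n k)
    (C : Tensor n) (hC : ∀ I, 0 ≤ C I)
    (η : ℝ) (hη : 0 < η)
    (r : ∀ k : Fin m, Fin (n k) → ℝ) (hr : ∀ k, IsSimplex (r k))
    (Kt : Tensor n) (hKt : ∀ I, 0 < Kt I)
    (εlog : ℝ) (hεlog0 : 0 < εlog) (hεlog1 : εlog ≤ 1)
    (hlog : supAbs (fun I : Idx n =>
      Real.log (Real.exp (-C I / η)) - Real.log (Kt I)) ≤ εlog)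
    (Pt : Tensor n) (hscal : IsScaling Kt Pt) (hPt1 : tnorm1 Pt = 1)
    (εstop : ℝ) (hεs0 : 0 < εstop) (hεs1 : εstop ≤ 1)
    (hstop : ∑ k, vnorm1 (fun j => marginal Pt k j - r k j) ≤ εstop)
    (Pstar : Tensor n) (hPstarF : Feasible r Pstar)
    (hPstarMin : ∀ Q : Tensor n, Feasible r Q → entCost C η Pstar ≤ entCost C η Q) :
    |entCost C η Pstar - entCost C η Pt| ≤
      η * (εlog * (2 + Real.log (2 / εlog))
          + εlog / 2 * Real.log ((∏ k, (n k : ℝ)) - 1)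
          + 2 * εstop * Real.log (εstop⁻¹ * ((∏ k, (n k : ℝ)) - 1)))
        + (εlog + 2 * εstop) * supAbs C := by
  classical
  have hm0 : 0 < m := by omega
  have hη0 : (0:ℝ) ≤ η := le_of_lt hη
  set k0 : Fin m := ⟨0, hm0⟩ with hk0
  haveI : Nonempty (Idx n) := ⟨fun k => ⟨0, by have := hn k; omega⟩⟩
  -- cardinality facts
  have hcard : Fintype.card (Idx n) = ∏ k, n k := by
    rw [Fintype.card_pi]
    exact Finset.prod_congr rfl fun k _ => Fintype.card_fin _
  have hN4 : 4 ≤ Fintype.card (Idx n) := by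
    rw [hcard]
    calc (4:ℕ) = 2 ^ 2 := by norm_num
      _ ≤ 2 ^ m := Nat.pow_le_pow_right (by norm_num) hm
      _ = ∏ _k : Fin m, 2 := by
          rw [Finset.prod_const, Finset.card_univ, Fintype.card_fin]
      _ ≤ ∏ k, n k := Finset.prod_le_prod' fun k _ => hn k
  set NR : ℝ := (Fintype.card (Idx n) : ℝ) with hNRdef
  have hNR4 : (4:ℝ) ≤ NR := by rw [hNRdef]; exact_mod_cast hN4
  have hNprod : (∏ k, (n k : ℝ)) = NR := by
    rw [hNRdef, hcard]
    push_cast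
    rfl
  rw [hNprod]
  -- the log-perturbation L
  have hlog' : supAbs (fun I : Idx n => -C I / η - Real.log (Kt I)) ≤ εlog := by
    have hfun : (fun I : Idx n => Real.log (Real.exp (-C I / η)) - Real.log (Kt I))
        = fun I : Idx n => -C I / η - Real.log (Kt I) :=
      funext fun I => by rw [Real.log_exp]
    rwa [hfun] at hlog
  set L : Idx n → ℝ := fun I => -C I / η - Real.log (Kt I) with hLdef
  have hL : ∀ I, |L I| ≤ εlog := fun I => le_trans (abs_le_supAbs L I) hlog'
  have hCL : ∀ I, C I = -η * Real.log (Kt I) - η * L I := by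
    intro I
    have hη' : η ≠ 0 := ne_of_gt hη
    rw [hLdef]
    field_simp
    ring
  -- basic facts on Pt and Pstar
  obtain ⟨β, hβ⟩ := hscal
  have hPt0 : ∀ I, 0 < Pt I := fun I => by
    rw [hβ I]
    exact mul_pos (hKt I) (Finset.prod_pos fun k _ => Real.exp_pos _)
  have hPt0' : ∀ I, 0 ≤ Pt I := fun I => le_of_lt (hPt0 I)
  have hPtsum : ∑ I, Pt I = 1 := by
    rw [← hPt1]
    unfold tnorm1
    exact Finset.sum_congr rfl fun I _ => (abs_of_pos (hPt0 I)).symm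
  have hr0 : ∀ k j, (0:ℝ) ≤ r k j := fun k j => le_of_lt ((hr k).1 j)
  have hr1 : ∀ k, ∑ j, r k j = 1 := fun k => (hr k).2
  obtain ⟨hPs0, hPsm⟩ := hPstarF
  have hPssum : ∑ I, Pstar I = 1 := by
    calc ∑ I, Pstar I = ∑ j, marginal Pstar k0 j := (sum_marginal _ _).symm
      _ = ∑ j, r k0 j := Finset.sum_congr rfl fun j _ => hPsm k0 j
      _ = 1 := hr1 k0
  have hmargPt0 : ∀ k j, 0 ≤ marginal Pt k j := fun k j => marginal_nonneg hPt0' k j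
  have hmargPtsum : ∀ k, ∑ j, marginal Pt k j = 1 := fun k => by
    rw [sum_marginal]; exact hPtsum
  -- the rounding error budgets
  have hhalf1 : ∑ k, ∑ j, max (marginal Pt k j - r k j) 0 ≤ εstop / 2 := by
    have per_k : ∀ k, ∑ j, max (marginal Pt k j - r k j) 0
        = vnorm1 (fun j => marginal Pt k j - r k j) / 2 := by
      intro k
      rw [sum_max_eq_half _ (by rw [Finset.sum_sub_distrib, hmargPtsum k, hr1 k]; ring)]
      simp [vnorm1]
    calc ∑ k, ∑ j, max (marginal Pt k j - r k j) 0
        = ∑ k, vnorm1 (fun j => marginal Pt k j - r k j) / 2 :=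
          Finset.sum_congr rfl fun k _ => per_k k
      _ = (∑ k, vnorm1 (fun j => marginal Pt k j - r k j)) / 2 := by
          rw [← Finset.sum_div]
      _ ≤ εstop / 2 := by linarith [hstop]
  have hhalf2 : ∑ k, ∑ j, max (marginal Pstar k j - marginal Pt k j) 0 ≤ εstop / 2 := by
    have per_k : ∀ k, ∑ j, max (marginal Pstar k j - marginal Pt k j) 0
        = vnorm1 (fun j => marginal Pt k j - r k j) / 2 := by
      intro k
      rw [sum_max_eq_half _ (by
        rw [Finset.sum_sub_distrib, hmargPtsum k, sum_marginal, hPssum]; ring)]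
      have : ∀ j, |marginal Pstar k j - marginal Pt k j|
          = |marginal Pt k j - r k j| := fun j => by
        rw [hPsm k j, abs_sub_comm]
      rw [Finset.sum_congr rfl fun j _ => this j]
      simp [vnorm1]
    calc ∑ k, ∑ j, max (marginal Pstar k j - marginal Pt k j) 0
        = ∑ k, vnorm1 (fun j => marginal Pt k j - r k j) / 2 :=
          Finset.sum_congr rfl fun k _ => per_k k
      _ = (∑ k, vnorm1 (fun j => marginal Pt k j - r k j)) / 2 := by
          rw [← Finset.sum_div]
      _ ≤ εstop / 2 := by linarith [hstop]
  -- rounding of Pt towards r, and of Pstar towards the marginals of Pt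
  obtain ⟨Q, hQ0, hQm, hQe⟩ := exists_rounding hm0 Pt hPt0' hPtsum r hr0 hr1
  have hQd : ∑ I, |Q I - Pt I| ≤ εstop := le_trans hQe (by linarith [hhalf1])
  obtain ⟨R, hR0, hRm, hRe⟩ := exists_rounding hm0 Pstar hPs0 hPssum
    (fun k j => marginal Pt k j) (fun k j => hmargPt0 k j) hmargPtsum
  have hRd : ∑ I, |R I - Pstar I| ≤ εstop := le_trans hRe (by linarith [hhalf2])
  have hQsum : ∑ I, Q I = 1 := by
    calc ∑ I, Q I = ∑ j, marginal Q k0 j := (sum_marginal _ _).symm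
      _ = ∑ j, r k0 j := Finset.sum_congr rfl fun j _ => hQm k0 j
      _ = 1 := hr1 k0
  have hRsum : ∑ I, R I = 1 := by
    calc ∑ I, R I = ∑ j, marginal R k0 j := (sum_marginal _ _).symm
      _ = ∑ j, marginal Pt k0 j := Finset.sum_congr rfl fun j _ => hRm k0 j
      _ = 1 := hmargPtsum k0
  -- entropy written via negMulLog
  have hent : ∀ X : Tensor n, entropy X = ∑ I, Real.negMulLog (X I) := by
    intro X
    unfold entropy
    rw [← Finset.sum_neg_distrib]
    exact Finset.sum_congr rfl fun I _ => by rw [Real.negMulLog]; ring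
  set D : ℝ := εstop * Real.log (2 * (NR - 1) / εstop) with hD
  have hdH1 : |entropy Q - entropy Pt| ≤ D := by
    rw [hent Q, hent Pt]
    exact entropy_diff_le hN4 Q Pt hQ0 hQsum hPt0' hPtsum hεs0 (by linarith) hQd
  have hdH2 : |entropy R - entropy Pstar| ≤ D := by
    rw [hent R, hent Pstar]
    exact entropy_diff_le hN4 R Pstar hR0 hRsum hPs0 hPssum hεs0 (by linarith) hRd
  have hS : 0 ≤ supAbs C := supAbs_nonneg C
  -- inner-product perturbations
  have htQ : |tinner C Q - tinner C Pt| ≤ supAbs C * εstop := by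
    have e : tinner C Q - tinner C Pt = ∑ I, (Q I - Pt I) * C I := by
      unfold tinner
      rw [← Finset.sum_sub_distrib]
      exact Finset.sum_congr rfl fun I _ => by ring
    rw [e]
    calc |∑ I, (Q I - Pt I) * C I| ≤ supAbs C * ∑ I, |Q I - Pt I| :=
          abs_sum_mul_le _ C (supAbs C) (fun I => abs_le_supAbs C I)
      _ ≤ supAbs C * εstop := mul_le_mul_of_nonneg_left hQd hS
  have htR : |tinner C R - tinner C Pstar| ≤ supAbs C * εstop := by
    have e : tinner C R - tinner C Pstar = ∑ I, (R I - Pstar I) * C I := by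
      unfold tinner
      rw [← Finset.sum_sub_distrib]
      exact Finset.sum_congr rfl fun I _ => by ring
    rw [e]
    calc |∑ I, (R I - Pstar I) * C I| ≤ supAbs C * ∑ I, |R I - Pstar I| :=
          abs_sum_mul_le _ C (supAbs C) (fun I => abs_le_supAbs C I)
      _ ≤ supAbs C * εstop := mul_le_mul_of_nonneg_left hRd hS
  -- entCost in Gibbs form
  have hV : ∀ X : Tensor n, entCost C η X
      = η * (∑ I, X I * (Real.log (X I) - Real.log (Kt I))) - η * ∑ I, X I * L I := by
    intro X
    have lhs : entCost C η X = ∑ I, (C I * X I + η * (X I * Real.log (X I))) := by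
      unfold entCost tinner entropy
      rw [mul_neg, sub_neg_eq_add, Finset.mul_sum, ← Finset.sum_add_distrib]
    have rhs : η * (∑ I, X I * (Real.log (X I) - Real.log (Kt I))) - η * ∑ I, X I * L I
        = ∑ I, (η * (X I * (Real.log (X I) - Real.log (Kt I))) - η * (X I * L I)) := by
      rw [Finset.mul_sum, Finset.mul_sum, ← Finset.sum_sub_distrib]
    rw [lhs, rhs]
    exact Finset.sum_congr rfl fun I _ => by rw [hCL I]; ring
  -- Gibbs optimality of Pt among plans with its own marginals
  have hAA : ∑ I, Pt I * (Real.log (Pt I) - Real.log (Kt I))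
      ≤ ∑ I, R I * (Real.log (R I) - Real.log (Kt I)) :=
    scaling_optimal hKt β hβ hR0 (by rw [hRsum, hPtsum]) (fun k j => hRm k j)
  have hLd : |(∑ I, Pt I * L I) - ∑ I, R I * L I| ≤ εlog * 2 := by
    have e : (∑ I, Pt I * L I) - ∑ I, R I * L I = ∑ I, (Pt I - R I) * L I := by
      rw [← Finset.sum_sub_distrib]
      exact Finset.sum_congr rfl fun I _ => by ring
    have hsum2 : ∑ I, |Pt I - R I| ≤ 2 := by
      calc ∑ I, |Pt I - R I| ≤ ∑ I, (Pt I + R I) := by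
            apply Finset.sum_le_sum
            intro I _
            rw [abs_le]
            constructor
            · have := hPt0' I; have := hR0 I; linarith
            · have := hR0 I; linarith
        _ = 2 := by rw [Finset.sum_add_distrib, hPtsum, hRsum]; norm_num
    rw [e]
    calc |∑ I, (Pt I - R I) * L I| ≤ εlog * ∑ I, |Pt I - R I| :=
          abs_sum_mul_le _ L εlog hL
      _ ≤ εlog * 2 := mul_le_mul_of_nonneg_left hsum2 (le_of_lt hεlog0)
  -- direction 1 : V(P*) - V(Pt) small
  have hd1 : entCost C η Pstar - entCost C η Pt ≤ supAbs C * εstop + η * D := by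
    have h1 : entCost C η Pstar ≤ entCost C η Q := hPstarMin Q ⟨hQ0, hQm⟩
    have e : entCost C η Q - entCost C η Pt
        = (tinner C Q - tinner C Pt) - η * (entropy Q - entropy Pt) := by
      unfold entCost; ring
    have h3 : -(entropy Q - entropy Pt) ≤ D := by linarith [(abs_le.1 hdH1).1]
    have h4 : η * -(entropy Q - entropy Pt) ≤ η * D := mul_le_mul_of_nonneg_left h3 hη0
    rw [mul_neg] at h4
    have h5 : tinner C Q - tinner C Pt ≤ supAbs C * εstop := (abs_le.1 htQ).2
    have h2 : entCost C η Q - entCost C η Pt ≤ supAbs C * εstop + η * D := by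
      rw [e]; linarith
    linarith
  -- direction 2 : V(Pt) - V(P*) small
  have hd2 : entCost C η Pt - entCost C η Pstar
      ≤ η * (2 * εlog) + (supAbs C * εstop + η * D) := by
    have hPtR : entCost C η Pt - entCost C η R ≤ η * (2 * εlog) := by
      rw [hV Pt, hV R]
      have g1 : η * (∑ I, Pt I * (Real.log (Pt I) - Real.log (Kt I)))
          ≤ η * (∑ I, R I * (Real.log (R I) - Real.log (Kt I))) :=
        mul_le_mul_of_nonneg_left hAA hη0
      have g3 : η * ((∑ I, R I * L I) - ∑ I, Pt I * L I) ≤ η * (εlog * 2) :=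
        mul_le_mul_of_nonneg_left (by linarith [(abs_le.1 hLd).1]) hη0
      rw [mul_sub] at g3
      linarith
    have e : entCost C η R - entCost C η Pstar
        = (tinner C R - tinner C Pstar) - η * (entropy R - entropy Pstar) := by
      unfold entCost; ring
    have h3 : -(entropy R - entropy Pstar) ≤ D := by linarith [(abs_le.1 hdH2).1]
    have h4 : η * -(entropy R - entropy Pstar) ≤ η * D := mul_le_mul_of_nonneg_left h3 hη0
    rw [mul_neg] at h4
    have h5 : tinner C R - tinner C Pstar ≤ supAbs C * εstop := (abs_le.1 htR).2
    have hRPs : entCost C η R - entCost C η Pstar ≤ supAbs C * εstop + η * D := by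
      rw [e]; linarith
    linarith
  -- combine
  have hηε : 0 ≤ η * (2 * εlog) := by positivity
  have habs : |entCost C η Pstar - entCost C η Pt|
      ≤ η * (2 * εlog) + (supAbs C * εstop + η * D) := by
    rw [abs_le]
    exact ⟨by linarith, by linarith⟩
  -- final scalar comparison
  have hx0 : (0:ℝ) < (NR - 1) / εstop := by
    apply div_pos _ hεs0
    linarith
  have hXinv : εstop⁻¹ * (NR - 1) = (NR - 1) / εstop := by
    rw [inv_mul_eq_div]
  rw [hXinv]
  set X : ℝ := Real.log ((NR - 1) / εstop) with hX
  have hDeq : D = εstop * (Real.log 2 + X) := by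
    rw [hD, mul_div_assoc, Real.log_mul two_ne_zero (ne_of_gt hx0)]
  have hlog2X : Real.log 2 ≤ X := by
    rw [hX]
    apply Real.log_le_log two_pos
    rw [le_div_iff₀ hεs0]
    linarith
  have hlg2e : 0 ≤ Real.log (2 / εlog) := Real.log_nonneg (by
    rw [le_div_iff₀ hεlog0]; linarith)
  have hlgN : 0 ≤ Real.log (NR - 1) := Real.log_nonneg (by linarith)
  have hlog2 : (0:ℝ) ≤ Real.log 2 := Real.log_nonneg one_le_two
  have t1 : 0 ≤ η * (εlog * Real.log (2 / εlog)) :=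
    mul_nonneg hη0 (mul_nonneg (le_of_lt hεlog0) hlg2e)
  have t2 : 0 ≤ η * (εlog / 2 * Real.log (NR - 1)) :=
    mul_nonneg hη0 (mul_nonneg (by linarith) hlgN)
  have t3 : η * (εstop * Real.log 2) ≤ η * (εstop * X) :=
    mul_le_mul_of_nonneg_left (mul_le_mul_of_nonneg_left hlog2X (le_of_lt hεs0)) hη0
  have t4 : εstop * supAbs C ≤ (εlog + 2 * εstop) * supAbs C :=
    mul_le_mul_of_nonneg_right (by linarith) hS
  have e2 : η * D = η * (εstop * Real.log 2) + η * (εstop * X) := by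
    rw [hDeq]; ring
  have e3 : η * (εlog * (2 + Real.log (2 / εlog)) + εlog / 2 * Real.log (NR - 1)
        + 2 * εstop * X)
      = η * (2 * εlog) + η * (εlog * Real.log (2 / εlog))
        + η * (εlog / 2 * Real.log (NR - 1)) + 2 * (η * (εstop * X)) := by
    ring
  calc |entCost C η Pstar - entCost C η Pt|
      ≤ η * (2 * εlog) + (supAbs C * εstop + η * D) := habs
    _ ≤ η * (εlog * (2 + Real.log (2 / εlog)) + εlog / 2 * Real.log (NR - 1)
          + 2 * εstop * X) + (εlog + 2 * εstop) * supAbs C := by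
        rw [e3]
        linarith [t1, t2, t3, t4, e2]


end MOT
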